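/- Let p, q be nonzero integers with q not dividing 2p, and let h = gcd(2p, q). Let F be a finite group containing commuting elements a, b and elements s, t with s⁻¹a^q s = a^p b and t⁻¹a^q t = a^p b⁻¹. Then s⁻¹a^h s commutes with a, with b, and with a^p b⁻¹. -/

import Mathlib

/-- Let p, q be nonzero integers with q not dividing 2p and h = gcd(2p, q).
In a finite group containing commuting a, b and elements s, t with
s⁻¹ a^q s = a^p b and t⁻¹ a^q t = a^p b⁻¹, the element s⁻¹ a^h s commutes
with a, with b and with a^p b⁻¹. -/
theorem conj_gcd_power_commutes (p q : ℤ) (hp : p ≠ 0) (hq : q ≠ 0)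
    (hnd : ¬ q ∣ 2 * p) (h : ℕ) (hh : h = Int.gcd (2 * p) q)
    (F : Type*) [Group F] [Finite F] (a b s t : F)
    (hab : Commute a b)
    (hs : s⁻¹ * a ^ q * s = a ^ p * b)
    (ht : t⁻¹ * a ^ q * t = a ^ p * b⁻¹) :
    Commute (s⁻¹ * a ^ (h : ℤ) * s) a ∧
    Commute (s⁻¹ * a ^ (h : ℤ) * s) b ∧
    Commute (s⁻¹ * a ^ (h : ℤ) * s) (a ^ p * b⁻¹) := by
  have hrpos : 0 < orderOf a := orderOf_pos a
  set r : ℤ := (orderOf a : ℤ) with hrdef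
  set g : ℕ := Int.gcd r q with hgdef
  obtain ⟨r', hr'⟩ : (g : ℤ) ∣ r := Int.gcd_dvd_left r q
  obtain ⟨q', hq'⟩ : (g : ℤ) ∣ q := Int.gcd_dvd_right r q
  -- commutation basics
  have hc1 : Commute (a ^ p * b) a := ((Commute.refl a).zpow_left p).mul_left hab.symm
  have hc2 : Commute (a ^ p * b) b := (hab.zpow_left p).mul_left (Commute.refl b)
  have hc3 : Commute (a ^ p * b) (a ^ p * b⁻¹) :=
    ((hc1.zpow_right p).mul_right hc2.inv_right)
  -- conjugation as automorphism
  have conj_pow : ∀ (x : F) (n : ℤ), s⁻¹ * x ^ n * s = (s⁻¹ * x * s) ^ n := by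
    intro x n
    simpa [MulAut.conj_apply, mul_assoc] using map_zpow (MulAut.conj s⁻¹) x n
  have conj_pow_t : ∀ (x : F) (n : ℤ), t⁻¹ * x ^ n * t = (t⁻¹ * x * t) ^ n := by
    intro x n
    simpa [MulAut.conj_apply, mul_assoc] using map_zpow (MulAut.conj t⁻¹) x n
  -- key vanishing: (a^p b)^r' = 1 and (a^p b⁻¹)^r' = 1
  have hqr' : a ^ (q * r') = 1 := by
    rw [← orderOf_dvd_iff_zpow_eq_one]
    exact ⟨q', by rw [hq', show ((orderOf a : ℤ)) = ↑g * r' from hr']; ring⟩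
  have h1 : (a ^ p * b) ^ r' = 1 := by
    rw [← hs, ← conj_pow, ← zpow_mul, hqr', mul_one, inv_mul_cancel]
  have h2 : (a ^ p * b⁻¹) ^ r' = 1 := by
    rw [← ht, ← conj_pow_t, ← zpow_mul, hqr', mul_one, inv_mul_cancel]
  -- hence a^(2p r') = 1
  have hprod : a ^ (2 * p) = (a ^ p * b) * (a ^ p * b⁻¹) := by
    have hb : b * a ^ p = a ^ p * b := (hab.symm.zpow_right p).eq
    have : (a ^ p * b) * (a ^ p * b⁻¹) = a ^ p * a ^ p := by
      rw [mul_assoc, ← mul_assoc b, hb, mul_assoc (a ^ p) b, mul_inv_cancel, mul_one]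
    rw [this, ← zpow_add, two_mul]
  have h2p : a ^ (2 * p * r') = 1 := by
    rw [zpow_mul, hprod, hc3.mul_zpow, h1, h2, one_mul]
  have hr'ne : r' ≠ 0 := by
    rintro rfl
    rw [mul_zero] at hr'
    exact (Nat.cast_pos.mpr hrpos).ne' hr'
  -- g ∣ 2p
  have hg2p : (g : ℤ) ∣ 2 * p := by
    have : r ∣ 2 * p * r' := orderOf_dvd_iff_zpow_eq_one.mpr h2p
    rw [hr'] at this
    exact (mul_dvd_mul_iff_right hr'ne).mp this
  -- g ∣ h
  obtain ⟨k, hk⟩ : (g : ℤ) ∣ (h : ℤ) := by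
    rw [hh]
    exact Int.natCast_dvd_natCast.mpr (Int.dvd_gcd hg2p (Int.gcd_dvd_right _ _))
  -- Bezout: h = r * (k * A) + q * (k * B)
  have hbez : (h : ℤ) = r * (Int.gcdA r q * k) + q * (Int.gcdB r q * k) := by
    rw [hk]
    nth_rewrite 1 [show (g : ℤ) = r * Int.gcdA r q + q * Int.gcdB r q from
      Int.gcd_eq_gcd_ab r q]
    ring
  have har : a ^ r = 1 := orderOf_dvd_iff_zpow_eq_one.mp dvd_rfl
  have hah : a ^ (h : ℤ) = (a ^ q) ^ (Int.gcdB r q * k) := by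
    rw [hbez, zpow_add, zpow_mul, har, one_zpow, one_mul, zpow_mul]
  have key : s⁻¹ * a ^ (h : ℤ) * s = (a ^ p * b) ^ (Int.gcdB r q * k) := by
    rw [hah, conj_pow, hs]
  rw [key]
  exact ⟨hc1.zpow_left _, hc2.zpow_left _, hc3.zpow_left _⟩
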